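/- Let G = (V,E) be a finite connected graph with symmetric irreflexive edge relation, fix a linear order on V, and set O = {(i,j) ∈ E : i < j}. Suppose each edge (i,j) ∈ E carries a continuous, strictly increasing function g_{ij} : ℝ → ℝ satisfying g_{ij}(x) = −g_{ji}(−x) for all x, and for (i,j) ∈ O let Ψ_{ij} : ℝ → ℝ be an antiderivative of g_{ij}. Let q : V → ℝ, let T ⊆ V be nonempty, let β : T → ℝ, and define the energy E(π) = ∑_{(i,j) ∈ O} Ψ_{ij}(π_i − π_j) − ∑_{i ∈ V} π_i q_i. Then a potential π : V → ℝ with π = β on T minimizes E among all potentials agreeing with β on T if and only if ∑_{j ∈ ∂i} g_{ji}(π_j − π_i) + q_i = 0 for every i ∈ V \ T. -/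

import Mathlib

open Finset

lemma aux_mono {g : ℝ → ℝ} (hg : Monotone g) (a c : ℝ) :
    Monotone fun t : ℝ => g (a + t * c) * c := by
  intro s t hst
  rcases le_or_gt 0 c with hc | hc
  · exact mul_le_mul_of_nonneg_right (hg (by nlinarith)) hc
  · have := hg (show a + t * c ≤ a + s * c by nlinarith)
    exact mul_le_mul_of_nonpos_right this hc.le

lemma aux_affine_deriv {Ψ g : ℝ → ℝ} (h : ∀ x, HasDerivAt Ψ (g x) x) (a c t : ℝ) :
    HasDerivAt (fun s : ℝ => Ψ (a + s * c)) (g (a + t * c) * c) t := by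
  have h1 : HasDerivAt (fun s : ℝ => a + s * c) c t := by
    simpa using ((hasDerivAt_id t).mul_const c).const_add a
  exact (h (a + t * c)).comp t h1

lemma aux_lin_deriv (p d qq : ℝ) (t : ℝ) :
    HasDerivAt (fun s : ℝ => (p + s * d) * qq) (d * qq) t := by
  have := (((hasDerivAt_id t).mul_const d).const_add p).mul_const qq
  simpa using this

lemma key_identity {V : Type*} [Fintype V] [DecidableEq V] [LinearOrder V]
    (E : V → V → Prop) [DecidableRel E]
    (hsymm : ∀ i j, E i j → E j i) (hirrefl : ∀ i, ¬ E i i)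
    (g : V → V → ℝ → ℝ) (hgsymm : ∀ i j, E i j → ∀ x : ℝ, g i j x = - g j i (-x))
    (x d : V → ℝ) :
    ∑ e ∈ (univ : Finset (V × V)).filter (fun e => E e.1 e.2 ∧ e.1 < e.2),
        g e.1 e.2 (x e.1 - x e.2) * (d e.1 - d e.2)
    = - ∑ i : V, d i * ∑ j ∈ univ.filter (fun j => E j i), g j i (x j - x i) := by
  classical
  set K : V × V → ℝ := fun e => g e.1 e.2 (x e.1 - x e.2) * d e.2 with hK
  set O : Finset (V × V) := univ.filter (fun e => E e.1 e.2 ∧ e.1 < e.2) with hO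
  set O' : Finset (V × V) := univ.filter (fun e => E e.1 e.2 ∧ e.2 < e.1) with hO'
  set Efull : Finset (V × V) := univ.filter (fun e => E e.1 e.2) with hEf
  have hdisj : Disjoint O O' := by
    rw [Finset.disjoint_left]
    intro e he he'
    simp only [hO, hO', mem_filter] at he he'
    exact absurd he.2.2 (not_lt.2 he'.2.2.le)
  have hunion : O ∪ O' = Efull := by
    ext e
    simp only [hO, hO', hEf, mem_union, mem_filter, mem_univ, true_and]
    constructor
    · rintro (⟨h, _⟩ | ⟨h, _⟩) <;> exact h
    · intro h
      have hne : e.1 ≠ e.2 := fun heq => hirrefl e.1 (heq ▸ h)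
      rcases lt_or_gt_of_ne hne with hlt | hgt
      · exact Or.inl ⟨h, hlt⟩
      · exact Or.inr ⟨h, hgt⟩
  have h2 : ∑ e ∈ O', K e = ∑ e ∈ O, K e.swap := by
    refine Finset.sum_nbij' Prod.swap Prod.swap ?_ ?_ ?_ ?_ ?_
    · intro e he
      simp only [hO, hO', mem_filter, mem_univ, true_and] at he ⊢
      exact ⟨hsymm _ _ he.1, he.2⟩
    · intro e he
      simp only [hO, hO', mem_filter, mem_univ, true_and] at he ⊢
      exact ⟨hsymm _ _ he.1, he.2⟩
    · intro e _; simp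
    · intro e _; simp
    · intro e _; simp
  have h3 : ∑ e ∈ Efull, K e = ∑ e ∈ O, K e + ∑ e ∈ O', K e := by
    rw [← hunion, Finset.sum_union hdisj]
  have h4 : ∑ e ∈ Efull, K e
      = ∑ i : V, d i * ∑ j ∈ univ.filter (fun j => E j i), g j i (x j - x i) := by
    rw [hEf, Finset.sum_filter, Fintype.sum_prod_type, Finset.sum_comm]
    refine Finset.sum_congr rfl fun i _ => ?_
    rw [Finset.mul_sum, Finset.sum_filter]
    refine Finset.sum_congr rfl fun j _ => ?_
    split <;> simp [hK, mul_comm]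
  have h1 : ∑ e ∈ O, g e.1 e.2 (x e.1 - x e.2) * (d e.1 - d e.2)
      = - (∑ e ∈ O, K e + ∑ e ∈ O, K e.swap) := by
    rw [← Finset.sum_add_distrib, ← Finset.sum_neg_distrib]
    refine Finset.sum_congr rfl fun e he => ?_
    simp only [hO, mem_filter, mem_univ, true_and] at he
    have hg := hgsymm e.1 e.2 he.1 (x e.1 - x e.2)
    rw [show -(x e.1 - x e.2) = x e.2 - x e.1 by ring] at hg
    simp only [hK, Prod.fst_swap, Prod.snd_swap]
    rw [hg]; ring
  rw [h1, ← h2, ← h3, h4]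

/-- **Variational characterization of dissipative flow solutions**: with the
orientation `O = {(i,j) ∈ E : i < j}`, edge functions `g i j` continuous,
strictly increasing and satisfying `g i j x = - g j i (-x)`, and `Ψ i j` an
antiderivative of `g i j` on oriented edges, a potential `π` agreeing with the
boundary values `β` on a nonempty `T ⊆ V` minimizes the energy
`E(π) = ∑_{(i,j) ∈ O} Ψ i j (π i - π j) - ∑ i, π i * q i` among all potentials
agreeing with `β` on `T` if and only if the flow conservation equation
`∑_{j ∈ ∂ i} g j i (π j - π i) + q i = 0` holds at every node `i ∉ T`. -/
theorem energy_minimizer_iff_flow_conservation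
    {V : Type*} [Fintype V] [DecidableEq V] [LinearOrder V] [Nonempty V]
    (E : V → V → Prop) [DecidableRel E]
    (hsymm : ∀ i j, E i j → E j i)
    (hirrefl : ∀ i, ¬ E i i)
    (hconn : ∀ u v : V, Relation.ReflTransGen E u v)
    (g : V → V → ℝ → ℝ)
    (hgcont : ∀ i j, E i j → Continuous (g i j))
    (hgmono : ∀ i j, E i j → StrictMono (g i j))
    (hgsymm : ∀ i j, E i j → ∀ x : ℝ, g i j x = - g j i (-x))
    (Ψ : V → V → ℝ → ℝ)
    (hΨ : ∀ i j, E i j → i < j → ∀ x : ℝ, HasDerivAt (Ψ i j) (g i j x) x)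
    (q : V → ℝ)
    (T : Finset V) (hT : T.Nonempty)
    (β : {i : V // i ∈ T} → ℝ)
    (π : V → ℝ)
    (hπβ : ∀ t (h : t ∈ T), π t = β ⟨t, h⟩) :
    (∀ π' : V → ℝ, (∀ t (h : t ∈ T), π' t = β ⟨t, h⟩) →
        ((∑ e ∈ (univ : Finset (V × V)).filter (fun e => E e.1 e.2 ∧ e.1 < e.2),
            Ψ e.1 e.2 (π e.1 - π e.2)) - ∑ i : V, π i * q i) ≤
        ((∑ e ∈ (univ : Finset (V × V)).filter (fun e => E e.1 e.2 ∧ e.1 < e.2),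
            Ψ e.1 e.2 (π' e.1 - π' e.2)) - ∑ i : V, π' i * q i))
    ↔
    (∀ i : V, i ∉ T →
        (∑ j ∈ univ.filter (fun j => E j i), g j i (π j - π i)) + q i = 0) := by
  classical
  set O : Finset (V × V) := (univ : Finset (V × V)).filter (fun e => E e.1 e.2 ∧ e.1 < e.2)
    with hO
  set F : (V → ℝ) → ℝ := fun p => (∑ e ∈ O, Ψ e.1 e.2 (p e.1 - p e.2)) - ∑ i : V, p i * q i
    with hF
  set flow : (V → ℝ) → V → ℝ :=
    fun x i => ∑ j ∈ univ.filter (fun j => E j i), g j i (x j - x i) with hflow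
  -- derivative of energy along a line
  have hD : ∀ (d : V → ℝ) (t : ℝ),
      HasDerivAt (fun s => F (fun i => π i + s * d i))
        (- ∑ i : V, d i * (flow (fun i => π i + t * d i) i + q i)) t := by
    intro d t
    have hedge : ∀ e ∈ O, HasDerivAt
        (fun s : ℝ => Ψ e.1 e.2 ((π e.1 - π e.2) + s * (d e.1 - d e.2)))
        (g e.1 e.2 ((π e.1 - π e.2) + t * (d e.1 - d e.2)) * (d e.1 - d e.2)) t := by
      intro e he
      simp only [hO, mem_filter, mem_univ, true_and] at he
      exact aux_affine_deriv (hΨ e.1 e.2 he.1 he.2) _ _ t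
    have hsum1 := HasDerivAt.fun_sum hedge
    have hlin : HasDerivAt (fun s : ℝ => ∑ i : V, (π i + s * d i) * q i)
        (∑ i : V, d i * q i) t := HasDerivAt.fun_sum fun i _ => aux_lin_deriv (π i) (d i) (q i) t
    have hcomb := hsum1.sub hlin
    have hfe : (fun s => F (fun i => π i + s * d i))
        = (fun s : ℝ => (∑ e ∈ O, Ψ e.1 e.2 ((π e.1 - π e.2) + s * (d e.1 - d e.2)))
            - ∑ i : V, (π i + s * d i) * q i) := by
      funext s
      simp only [hF]
      congr 1
      refine Finset.sum_congr rfl fun e _ => ?_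
      congr 1
      ring
    rw [hfe]
    set x : V → ℝ := fun i => π i + t * d i with hx
    have hval : (∑ e ∈ O, g e.1 e.2 ((π e.1 - π e.2) + t * (d e.1 - d e.2)) * (d e.1 - d e.2))
        - ∑ i : V, d i * q i
        = - ∑ i : V, d i * (flow x i + q i) := by
      have hstep : (∑ e ∈ O, g e.1 e.2 ((π e.1 - π e.2) + t * (d e.1 - d e.2)) * (d e.1 - d e.2))
          = ∑ e ∈ O, g e.1 e.2 (x e.1 - x e.2) * (d e.1 - d e.2) := by
        refine Finset.sum_congr rfl fun e _ => ?_
        congr 2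
        simp only [hx]; ring
      rw [hstep, key_identity E hsymm hirrefl g hgsymm x d]
      simp only [hflow, mul_add, Finset.sum_add_distrib]
      ring
    rw [← hval]
    exact hcomb
  constructor
  · -- minimizer ⇒ flow conservation
    intro hmin i hiT
    set d : V → ℝ := fun j => if j = i then (1 : ℝ) else 0 with hd
    have hfeas : ∀ t : ℝ, ∀ t' (h : t' ∈ T), π t' + t * d t' = β ⟨t', h⟩ := by
      intro t t' h
      have : t' ≠ i := fun he => hiT (he ▸ h)
      simp [hd, this, hπβ t' h]
    have hmin' : IsLocalMin (fun s => F (fun j => π j + s * d j)) 0 := by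
      apply Filter.Eventually.of_forall
      intro t
      have h0 : (fun j => π j + (0:ℝ) * d j) = π := by funext j; ring
      have := hmin (fun j => π j + t * d j) (fun t' h => hfeas t t' h)
      simpa [hF, h0] using this
    have hder := hD d 0
    have hzero := hmin'.hasDerivAt_eq_zero hder
    have hx0 : (fun j => π j + (0:ℝ) * d j) = π := by funext j; ring
    rw [hx0] at hzero
    have hsingle : (∑ j : V, d j * (flow π j + q j)) = flow π i + q i := by
      rw [show (∑ j : V, d j * (flow π j + q j))
          = ∑ j : V, if j = i then flow π j + q j else 0 by
        refine Finset.sum_congr rfl fun j _ => ?_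
        by_cases h : j = i <;> simp [hd, h]]
      simp
    rw [hsingle] at hzero
    have : flow π i + q i = 0 := by linarith [neg_eq_zero.mp hzero]
    simpa [hflow] using this
  · -- flow conservation ⇒ minimizer
    intro hcons π' hπ'β
    set d : V → ℝ := fun j => π' j - π j with hd
    set φ : ℝ → ℝ := fun s => F (fun i => π i + s * d i) with hφ
    set D : ℝ → ℝ := fun t => - ∑ i : V, d i * (flow (fun i => π i + t * d i) i + q i) with hDdef
    have hφD : ∀ t, HasDerivAt φ (D t) t := fun t => hD d t
    -- D is monotone
    have hDedge : ∀ t : ℝ, D t =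
        (∑ e ∈ O, g e.1 e.2 ((π e.1 - π e.2) + t * (d e.1 - d e.2)) * (d e.1 - d e.2))
          - ∑ i : V, d i * q i := by
      intro t
      set x : V → ℝ := fun i => π i + t * d i with hx
      have hstep : (∑ e ∈ O, g e.1 e.2 ((π e.1 - π e.2) + t * (d e.1 - d e.2)) * (d e.1 - d e.2))
          = ∑ e ∈ O, g e.1 e.2 (x e.1 - x e.2) * (d e.1 - d e.2) := by
        refine Finset.sum_congr rfl fun e _ => ?_
        congr 2
        simp only [hx]; ring
      rw [hstep, key_identity E hsymm hirrefl g hgsymm x d]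
      simp only [hDdef, hflow, mul_add, Finset.sum_add_distrib]
      ring
    have hDmono : Monotone D := by
      intro s t hst
      rw [hDedge s, hDedge t]
      apply sub_le_sub_right
      refine Finset.sum_le_sum fun e he => ?_
      simp only [hO, mem_filter, mem_univ, true_and] at he
      exact aux_mono (hgmono e.1 e.2 he.1).monotone (π e.1 - π e.2) (d e.1 - d e.2) hst
    -- D 0 = 0
    have hD0 : D 0 = 0 := by
      have hx0 : (fun j => π j + (0:ℝ) * d j) = π := by funext j; ring
      simp only [hDdef, hx0, neg_eq_zero]
      refine Finset.sum_eq_zero fun i _ => ?_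
      by_cases hi : i ∈ T
      · have : d i = 0 := by simp [hd, hπ'β i hi, hπβ i hi]
        simp [this]
      · have := hcons i hi
        have : flow π i + q i = 0 := by simpa [hflow] using this
        simp [this]
    -- φ monotone on [0,1]
    have hφdiff : Differentiable ℝ φ := fun t => (hφD t).differentiableAt
    have hφmono : MonotoneOn φ (Set.Icc (0:ℝ) 1) := by
      apply monotoneOn_of_deriv_nonneg (convex_Icc 0 1) hφdiff.continuous.continuousOn
        (hφdiff.differentiableOn)
      intro t ht
      rw [(hφD t).deriv, ← hD0]
      have ht' : (0:ℝ) ≤ t := by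
        simp only [interior_Icc, Set.mem_Ioo] at ht
        exact ht.1.le
      exact hDmono ht'
    have hle := hφmono (Set.left_mem_Icc.2 zero_le_one) (Set.right_mem_Icc.2 zero_le_one)
      zero_le_one
    have hφ0 : φ 0 = F π := by
      have hx0 : (fun j => π j + (0:ℝ) * d j) = π := by funext j; ring
      simp only [hφ, hx0]
    have hφ1 : φ 1 = F π' := by
      have hx1 : (fun j => π j + (1:ℝ) * d j) = π' := by funext j; simp [hd]
      simp only [hφ, hx1]
    rw [hφ0, hφ1] at hle
    exact hle
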